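/- For the Cantor ternary set C ⊆ [0,1], the Minkowski sum C + C equals the interval [0,2]. -/

import Mathlib

open Set Pointwise

lemma preCantorSet_subset_unitInterval' (n : ℕ) : preCantorSet n ⊆ Set.Icc 0 1 := by
  induction n with
  | zero => simp
  | succ n ih =>
    rintro x (⟨y, hy, rfl⟩ | ⟨y, hy, rfl⟩) <;>
      obtain ⟨h0, h1⟩ := ih hy <;> constructor <;> simp <;> linarith

lemma preCantorSet_antitone' : Antitone preCantorSet := by
  apply antitone_nat_of_succ_le
  intro n
  induction n with
  | zero =>
    rintro x (⟨y, hy, rfl⟩ | ⟨y, hy, rfl⟩) <;> obtain ⟨h0, h1⟩ := hy <;>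
      constructor <;> simp <;> linarith
  | succ n ih =>
    rintro x (⟨y, hy, rfl⟩ | ⟨y, hy, rfl⟩)
    · exact Or.inl ⟨y, ih hy, rfl⟩
    · exact Or.inr ⟨y, ih hy, rfl⟩

lemma exists_add_preCantorSet {x : ℝ} (hx : x ∈ Set.Icc (0:ℝ) 2) (n : ℕ) :
    ∃ a ∈ preCantorSet n, ∃ b ∈ preCantorSet n, a + b = x := by
  induction n generalizing x with
  | zero =>
    obtain ⟨h0, h2⟩ := hx
    rcases le_total x 1 with h | h
    · exact ⟨x, ⟨h0, h⟩, 0, ⟨le_refl _, zero_le_one⟩, by ring⟩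
    · exact ⟨1, ⟨zero_le_one, le_refl _⟩, x - 1, ⟨by linarith, by linarith⟩, by ring⟩
  | succ n ih =>
    obtain ⟨h0, h2⟩ := hx
    rcases le_total x (2/3) with h | h
    · obtain ⟨a, ha, b, hb, hab⟩ := ih (x := 3 * x) ⟨by linarith, by linarith⟩
      exact ⟨a / 3, Or.inl ⟨a, ha, rfl⟩, b / 3, Or.inl ⟨b, hb, rfl⟩, by
        field_simp; linarith⟩
    · rcases le_total x (4/3) with h' | h'
      · obtain ⟨a, ha, b, hb, hab⟩ := ih (x := 3 * x - 2) ⟨by linarith, by linarith⟩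
        exact ⟨a / 3, Or.inl ⟨a, ha, rfl⟩, (2 + b) / 3, Or.inr ⟨b, hb, rfl⟩, by
          field_simp; linarith⟩
      · obtain ⟨a, ha, b, hb, hab⟩ := ih (x := 3 * x - 4) ⟨by linarith, by linarith⟩
        exact ⟨(2 + a) / 3, Or.inr ⟨a, ha, rfl⟩, (2 + b) / 3, Or.inr ⟨b, hb, rfl⟩, by
          field_simp; linarith⟩

/-- For the Cantor ternary set `C ⊆ [0,1]`, the Minkowski sum `C + C` equals `[0,2]`. -/
theorem stmt_6 : cantorSet + cantorSet = Set.Icc (0 : ℝ) 2 := by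
  apply Set.Subset.antisymm
  · rintro x ⟨a, ha, b, hb, rfl⟩
    obtain ⟨ha0, ha1⟩ := cantorSet_subset_unitInterval ha
    obtain ⟨hb0, hb1⟩ := cantorSet_subset_unitInterval hb
    exact ⟨by dsimp only; linarith, by dsimp only; linarith⟩
  · intro x hx
    -- choose for each n a pair summing to x
    choose a ha b hb hab using fun n => exists_add_preCantorSet hx n
    have haI : ∀ n, a n ∈ Set.Icc (0:ℝ) 1 := fun n => preCantorSet_subset_unitInterval' n (ha n)
    obtain ⟨l, hl, φ, hφ, hconv⟩ := isCompact_Icc.tendsto_subseq haI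
    have hmem : ∀ m, l ∈ preCantorSet m := by
      intro m
      refine (isClosed_preCantorSet m).mem_of_tendsto hconv ?_
      filter_upwards [Filter.eventually_ge_atTop m] with k hk
      exact preCantorSet_antitone' (hk.trans (hφ.id_le k)) (ha (φ k))
    have hconv' : Filter.Tendsto (fun k => b (φ k)) Filter.atTop (nhds (x - l)) := by
      have : (fun k => b (φ k)) = fun k => x - a (φ k) := by
        funext k; have := hab (φ k); linarith
      rw [this]
      exact Filter.Tendsto.const_sub x hconv
    have hmem' : ∀ m, x - l ∈ preCantorSet m := by
      intro m
      refine (isClosed_preCantorSet m).mem_of_tendsto hconv' ?_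
      filter_upwards [Filter.eventually_ge_atTop m] with k hk
      exact preCantorSet_antitone' (hk.trans (hφ.id_le k)) (hb (φ k))
    exact ⟨l, Set.mem_iInter.mpr hmem, x - l, Set.mem_iInter.mpr hmem', by ring⟩
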